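/- Let M = [[A, B],[Bᵀ, A]] be a 2n×2n real symmetric matrix with A symmetric. Then λ₁(M) + λ_{2n}(M) ≤ 2·λ₁(A), where λ₁ denotes the largest eigenvalue and λ_{2n} the smallest. -/

import Mathlib

open Matrix Polynomial

section aux
variable {m : Type*} [Fintype m] [DecidableEq m]

lemma charpoly_diag (d : m → ℝ) :
    (Matrix.diagonal d).charpoly = ∏ i, (X - C (d i)) := by
  unfold Matrix.charpoly charmatrix
  rw [show (Matrix.scalar m (X : ℝ[X])) = Matrix.diagonal (fun _ => (X : ℝ[X])) from rfl]
  rw [show (C : ℝ →+* ℝ[X]).mapMatrix (Matrix.diagonal d) =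
      Matrix.diagonal (fun i => C (d i)) from by
    ext i j
    by_cases h : i = j <;> simp [h, Matrix.diagonal_apply]]
  rw [Matrix.diagonal_sub, Matrix.det_diagonal]

lemma charpoly_conj (U D : Matrix m m ℝ) (hU : U ∈ Matrix.unitaryGroup m ℝ) :
    (U * D * star U).charpoly = D.charpoly := by
  have hUV : U * star U = 1 := (Matrix.mem_unitaryGroup_iff).mp hU
  unfold Matrix.charpoly
  have hc : charmatrix (U * D * star U) =
      (C : ℝ →+* ℝ[X]).mapMatrix U * charmatrix D * (C : ℝ →+* ℝ[X]).mapMatrix (star U) := by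
    unfold charmatrix
    rw [mul_sub, sub_mul, _root_.map_mul, _root_.map_mul]
    congr 1
    rw [show ((C : ℝ →+* ℝ[X]).mapMatrix U * Matrix.scalar m (X : ℝ[X]) : Matrix m m ℝ[X])
        = Matrix.scalar m (X : ℝ[X]) * (C : ℝ →+* ℝ[X]).mapMatrix U from
      (Matrix.scalar_commute _ (Commute.all _) _).symm, mul_assoc, ← _root_.map_mul, hUV]
    simp
  have h1 : ((C : ℝ →+* ℝ[X]).mapMatrix U).det * ((C : ℝ →+* ℝ[X]).mapMatrix (star U)).det
      = 1 := by
    rw [← Matrix.det_mul, ← _root_.map_mul, hUV]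
    simp
  rw [hc, Matrix.det_mul, Matrix.det_mul, mul_right_comm, h1, one_mul]

lemma herm_charpoly {M : Matrix m m ℝ} (hM : M.IsHermitian) :
    M.charpoly = ∏ i, (X - C (hM.eigenvalues i)) := by
  conv_lhs => rw [hM.spectral_theorem, Unitary.conjStarAlgAut_apply]
  rw [charpoly_conj _ _ (hM.eigenvectorUnitary).2, show (RCLike.ofReal ∘ hM.eigenvalues : m → ℝ)
    = hM.eigenvalues from rfl, charpoly_diag]

lemma rayleigh_repr {M : Matrix m m ℝ} (hM : M.IsHermitian) (z : m → ℝ) :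
    ∃ w : m → ℝ, z ⬝ᵥ (M *ᵥ z) = ∑ i, hM.eigenvalues i * (w i)^2 ∧ z ⬝ᵥ z = ∑ i, (w i)^2 := by
  set U : Matrix m m ℝ := (hM.eigenvectorUnitary : Matrix m m ℝ)
  have hUV : U * star U = 1 := (Matrix.mem_unitaryGroup_iff).mp hM.eigenvectorUnitary.2
  have hstar : star U = Uᵀ := by
    rw [Matrix.star_eq_conjTranspose, Matrix.conjTranspose_eq_transpose_of_trivial]
  refine ⟨Uᵀ *ᵥ z, ?_, ?_⟩
  · conv_lhs => rw [hM.spectral_theorem, Unitary.conjStarAlgAut_apply]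
    rw [show (Matrix.diagonal (RCLike.ofReal ∘ hM.eigenvalues) : Matrix m m ℝ)
      = Matrix.diagonal hM.eigenvalues from rfl]
    rw [hstar, ← Matrix.mulVec_mulVec, ← Matrix.mulVec_mulVec,
      Matrix.dotProduct_mulVec z U, ← Matrix.mulVec_transpose]
    simp [dotProduct, Matrix.mulVec_diagonal, Finset.mul_sum]
    ring_nf
    exact Finset.sum_congr rfl fun i _ => by ring
  · have : (Uᵀ *ᵥ z) ⬝ᵥ (Uᵀ *ᵥ z) = z ⬝ᵥ z := by
      rw [Matrix.dotProduct_mulVec (Uᵀ *ᵥ z) Uᵀ z, ← Matrix.mulVec_transpose,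
        Matrix.transpose_transpose, Matrix.mulVec_mulVec, ← hstar, hUV, Matrix.one_mulVec]
    rw [← this]
    simp [dotProduct, sq]
end aux

lemma roots_prod_X_sub {κ : Type*} [Fintype κ] (f : κ → ℝ) :
    (∏ i, (X - C (f i))).roots = Multiset.map f Finset.univ.val := by
  have := Polynomial.roots_multiset_prod_X_sub_C (Finset.univ.val.map f)
  rw [Multiset.map_map] at this
  rw [Finset.prod_eq_multiset_prod]
  exact this


/-- Let `M = [[A, B], [Bᵀ, A]]` be a `2n × 2n` real symmetric block matrix with `A`
symmetric. Then `λ₁(M) + λ_{2n}(M) ≤ 2 λ₁(A)`, where `λ₁` denotes the largest and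
`λ_{2n}` the smallest eigenvalue (eigenvalues listed in nonincreasing order). -/
theorem stmt15 {n : ℕ} (hn : 0 < n) (A B : Matrix (Fin n) (Fin n) ℝ)
    (hA : A.IsSymm)
    (μ : Fin (2 * n) → ℝ) (hμa : Antitone μ)
    (hμ : (Matrix.fromBlocks A B Bᵀ A).charpoly = ∏ i, (X - C (μ i)))
    (ν : Fin n → ℝ) (hνa : Antitone ν)
    (hν : A.charpoly = ∏ i, (X - C (ν i))) :
    μ ⟨0, by omega⟩ + μ ⟨2 * n - 1, by omega⟩ ≤ 2 * ν ⟨0, hn⟩ := by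
  classical
  set M : Matrix (Fin n ⊕ Fin n) (Fin n ⊕ Fin n) ℝ := Matrix.fromBlocks A B Bᵀ A with hMdef
  have hM : M.IsHermitian := by
    rw [Matrix.IsHermitian, Matrix.conjTranspose_eq_transpose_of_trivial, hMdef,
      Matrix.fromBlocks_transpose, Matrix.transpose_transpose, hA]
  have hAH : A.IsHermitian := by
    rw [Matrix.IsHermitian, Matrix.conjTranspose_eq_transpose_of_trivial]; exact hA
  set μ0 : ℝ := μ ⟨0, by omega⟩ with hμ0
  set μl : ℝ := μ ⟨2 * n - 1, by omega⟩ with hμl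
  set ν0 : ℝ := ν ⟨0, hn⟩ with hν0
  -- multiset equality for M
  have hMeq : Multiset.map μ Finset.univ.val = Multiset.map hM.eigenvalues Finset.univ.val := by
    rw [← roots_prod_X_sub μ, ← roots_prod_X_sub hM.eigenvalues, ← hμ, ← herm_charpoly hM]
  have hAeq : Multiset.map ν Finset.univ.val = Multiset.map hAH.eigenvalues Finset.univ.val := by
    rw [← roots_prod_X_sub ν, ← roots_prod_X_sub hAH.eigenvalues, ← hν, ← herm_charpoly hAH]
  -- the largest eigenvalue of M is attained
  obtain ⟨j, -, hj⟩ : ∃ j ∈ Finset.univ.val, hM.eigenvalues j = μ0 := by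
    have : μ0 ∈ Multiset.map hM.eigenvalues Finset.univ.val := by
      rw [← hMeq]
      exact Multiset.mem_map_of_mem μ (Finset.mem_univ_val _)
    exact Multiset.mem_map.mp this
  -- lower bound on all eigenvalues of M
  have hlow : ∀ j, μl ≤ hM.eigenvalues j := by
    intro j
    have : hM.eigenvalues j ∈ Multiset.map μ Finset.univ.val := by
      rw [hMeq]; exact Multiset.mem_map_of_mem _ (Finset.mem_univ_val _)
    obtain ⟨k, -, hk⟩ := Multiset.mem_map.mp this
    rw [← hk]
    exact hμa (by rw [Fin.le_def]; simp; omega)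
  -- upper bound on all eigenvalues of A
  have hup : ∀ i, hAH.eigenvalues i ≤ ν0 := by
    intro i
    have : hAH.eigenvalues i ∈ Multiset.map ν Finset.univ.val := by
      rw [hAeq]; exact Multiset.mem_map_of_mem _ (Finset.mem_univ_val _)
    obtain ⟨k, -, hk⟩ := Multiset.mem_map.mp this
    rw [← hk]
    exact hνa (by rw [Fin.le_def]; simp)
  -- the eigenvector for μ0
  set x : (Fin n ⊕ Fin n) → ℝ := ⇑(hM.eigenvectorBasis j) with hxdef
  have hx : M *ᵥ x = μ0 • x := by rw [hxdef, hM.mulVec_eigenvectorBasis, hj]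
  have hxx : x ⬝ᵥ x = 1 := by
    have h1 : ‖hM.eigenvectorBasis j‖ = 1 := hM.eigenvectorBasis.orthonormal.1 j
    have h2 : (inner ℝ (hM.eigenvectorBasis j) (hM.eigenvectorBasis j) : ℝ) = 1 := by
      rw [real_inner_self_eq_norm_mul_norm, h1]; norm_num
    rw [PiLp.inner_apply] at h2
    simp only [RCLike.inner_apply, starRingEnd_apply, star_trivial] at h2
    simpa [dotProduct] using h2
  set u : Fin n → ℝ := fun i => x (Sum.inl i) with hu
  set v : Fin n → ℝ := fun i => x (Sum.inr i) with hv
  have hxuv : x = Sum.elim u v := by funext i; cases i <;> rfl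
  set y : (Fin n ⊕ Fin n) → ℝ := Sum.elim u (-v) with hy
  have hMx : x ⬝ᵥ (M *ᵥ x) = μ0 := by
    rw [hx, dotProduct_smul, hxx, smul_eq_mul, mul_one]
  have hyy : y ⬝ᵥ y = 1 := by
    rw [← hxx, hxuv, hy]
    simp [sumElim_dotProduct_sumElim, dotProduct_neg, neg_dotProduct]
  have huv1 : u ⬝ᵥ u + v ⬝ᵥ v = 1 := by
    rw [← hxx, hxuv, sumElim_dotProduct_sumElim]
  have hsum : x ⬝ᵥ (M *ᵥ x) + y ⬝ᵥ (M *ᵥ y) = 2 * (u ⬝ᵥ (A *ᵥ u) + v ⬝ᵥ (A *ᵥ v)) := by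
    rw [hxuv, hy, hMdef]
    simp only [Matrix.fromBlocks_mulVec, sumElim_dotProduct_sumElim,
      Sum.elim_comp_inl, Sum.elim_comp_inr,
      Matrix.mulVec_neg, dotProduct_add, dotProduct_neg, neg_dotProduct,
      add_dotProduct, neg_neg]
    ring
  -- Rayleigh bounds
  have hymin : μl ≤ y ⬝ᵥ (M *ᵥ y) := by
    obtain ⟨w, hw1, hw2⟩ := rayleigh_repr hM y
    rw [hyy] at hw2
    rw [hw1]
    calc μl = ∑ i, μl * (w i)^2 := by rw [← Finset.mul_sum, ← hw2, mul_one]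
    _ ≤ ∑ i, hM.eigenvalues i * (w i)^2 :=
      Finset.sum_le_sum fun i _ => mul_le_mul_of_nonneg_right (hlow i) (sq_nonneg _)
  have hAray : ∀ z : Fin n → ℝ, z ⬝ᵥ (A *ᵥ z) ≤ ν0 * (z ⬝ᵥ z) := by
    intro z
    obtain ⟨w, hw1, hw2⟩ := rayleigh_repr hAH z
    rw [hw1, hw2, Finset.mul_sum]
    exact Finset.sum_le_sum fun i _ => mul_le_mul_of_nonneg_right (hup i) (sq_nonneg _)
  have hprod : ν0 * (u ⬝ᵥ u) + ν0 * (v ⬝ᵥ v) = ν0 := by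
    rw [← mul_add, huv1, mul_one]
  linarith [hsum, hMx, hymin, hprod, hAray u, hAray v]
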